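/- Let C_0 ⊆ C_1 ⊆ ... ⊆ C_{a-1} ⊆ C_a = (ZMod 2)^n and C'_0 ⊆ C'_1 ⊆ ... ⊆ C'_{a-1} ⊆ C'_a = (ZMod 2)^n be two families of nested binary linear codes with C_i ⊆ C'_i for all i, and suppose the chain C'_0 ⊆ ... ⊆ C'_a is closed under Schur product. Then Γ'_CF (the code formula set of the primed chain) is an additive subgroup of ℤ^n containing Γ_CF, and hence Λ_CF ⊆ Γ'_CF, where Λ_CF is the smallest additive subgroup containing Γ_CF. -/
import Mathlib


noncomputable section

/-- The natural embedding of `(ZMod 2)^n` into `ℤ^n`, applying coordinatewise the map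
sending `0` to `0` and `1` to `1`. -/
def psi {n : ℕ} (x : Fin n → ZMod 2) : Fin n → ℤ := fun k => ((x k).val : ℤ)

/-- The code formula set `Γ_CF = ψ(C₀) + 2ψ(C₁) + ... + 2^{a-1}ψ(C_{a-1}) + 2^a ℤ^n`
associated to a chain of binary codes `C₀ ⊆ C₁ ⊆ ... ⊆ C_a = (ZMod 2)^n`. -/
def GammaCF {n : ℕ} (a : ℕ) (C : ℕ → Submodule (ZMod 2) (Fin n → ZMod 2)) :
    Set (Fin n → ℤ) :=
  { x | ∃ (c : ℕ → Fin n → ZMod 2) (l : Fin n → ℤ),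
      (∀ i < a, c i ∈ C i) ∧
      x = (∑ i ∈ Finset.range a, (2 ^ i : ℤ) • psi (c i)) + (2 ^ a : ℤ) • l }

lemma psi_add {n : ℕ} (x y : Fin n → ZMod 2) :
    psi (x + y) + (2:ℤ) • psi (x * y) = psi x + psi y := by
  funext k
  have h : ∀ v w : ZMod 2, (((v + w).val : ℤ)) + 2 * ((v * w).val : ℤ)
      = (v.val : ℤ) + (w.val : ℤ) := by decide
  simpa [psi, Pi.smul_apply, smul_eq_mul] using h (x k) (y k)

lemma cons_eq {n : ℕ} (a : ℕ) (c : ℕ → Fin n → ZMod 2) (l : Fin n → ℤ) :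
    (∑ i ∈ Finset.range (a+1), (2 ^ i : ℤ) • psi (c i)) + (2 ^ (a+1) : ℤ) • l
    = psi (c 0) + (2:ℤ) • ((∑ i ∈ Finset.range a, (2 ^ i : ℤ) • psi (c (i+1)))
        + (2 ^ a : ℤ) • l) := by
  have hs : ∀ g : ℕ → Fin n → ℤ,
      ∑ i ∈ Finset.range a, (2 ^ (i+1) : ℤ) • g i
        = (2:ℤ) • ∑ i ∈ Finset.range a, (2 ^ i : ℤ) • g i := by
    intro g
    rw [Finset.smul_sum]
    exact Finset.sum_congr rfl fun i _ => by rw [smul_smul, ← pow_succ']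
  rw [Finset.sum_range_succ', hs, pow_zero, one_smul, pow_succ', mul_smul, smul_add]
  abel

lemma psi_zero {n : ℕ} : psi (0 : Fin n → ZMod 2) = 0 := by
  funext k; simp [psi]

lemma zero_mem_gamma {n : ℕ} (a : ℕ) (C : ℕ → Submodule (ZMod 2) (Fin n → ZMod 2)) :
    (0 : Fin n → ℤ) ∈ GammaCF a C := by
  refine ⟨0, 0, fun i _ => (C i).zero_mem, ?_⟩
  simp [psi_zero]

lemma absorb_gamma {n : ℕ} {a : ℕ} {C : ℕ → Submodule (ZMod 2) (Fin n → ZMod 2)}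
    {x : Fin n → ℤ} (hx : x ∈ GammaCF a C) (l : Fin n → ℤ) :
    x + (2 ^ a : ℤ) • l ∈ GammaCF a C := by
  obtain ⟨c, m, hc, rfl⟩ := hx
  exact ⟨c, m + l, hc, by rw [smul_add, add_assoc]⟩

lemma psi_mem_gamma {n : ℕ} {a : ℕ} {C : ℕ → Submodule (ZMod 2) (Fin n → ZMod 2)}
    {e : Fin n → ZMod 2} (he : e ∈ C 0) : psi e ∈ GammaCF a C := by
  cases a with
  | zero => exact ⟨0, psi e, by simp, by simp⟩
  | succ b =>
      refine ⟨fun i => if i = 0 then e else 0, 0, ?_, ?_⟩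
      · intro i _
        by_cases h : i = 0
        · simpa [h] using he
        · simp [h]
      · rw [Finset.sum_range_succ']
        simp [psi_zero]

lemma gamma_cons {n : ℕ} {a : ℕ} {C : ℕ → Submodule (ZMod 2) (Fin n → ZMod 2)}
    {c : Fin n → ZMod 2} (hc : c ∈ C 0) {z : Fin n → ℤ}
    (hz : z ∈ GammaCF a (fun i => C (i+1))) :
    psi c + (2:ℤ) • z ∈ GammaCF (a+1) C := by
  obtain ⟨f, m, hf, rfl⟩ := hz
  refine ⟨fun i => Nat.rec c (fun j _ => f j) i, m, ?_, ?_⟩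
  · intro i hi
    cases i with
    | zero => exact hc
    | succ j => exact hf j (by omega)
  · rw [cons_eq]; rfl

lemma gamma_add {n : ℕ} : ∀ (a : ℕ) (C : ℕ → Submodule (ZMod 2) (Fin n → ZMod 2)),
    (∀ i < a, ∀ c ∈ C i, ∀ d ∈ C i, c * d ∈ C (i+1)) →
    ∀ x ∈ GammaCF a C, ∀ y ∈ GammaCF a C, x + y ∈ GammaCF a C := by
  intro a
  induction a with
  | zero =>
      intro C _ x _ y _
      exact ⟨0, x + y, by simp, by simp⟩
  | succ b ih =>
      intro C hschur x hx y hy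
      obtain ⟨c, l, hc, rfl⟩ := hx
      obtain ⟨d, m, hd, rfl⟩ := hy
      rw [cons_eq, cons_eq]
      have hzx : (∑ i ∈ Finset.range b, (2 ^ i : ℤ) • psi (c (i+1)))
          + (2 ^ b : ℤ) • l ∈ GammaCF b (fun i => C (i+1)) :=
        ⟨fun i => c (i+1), l, fun i hi => hc (i+1) (by omega), rfl⟩
      have hzy : (∑ i ∈ Finset.range b, (2 ^ i : ℤ) • psi (d (i+1)))
          + (2 ^ b : ℤ) • m ∈ GammaCF b (fun i => C (i+1)) :=
        ⟨fun i => d (i+1), m, fun i hi => hd (i+1) (by omega), rfl⟩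
      have hsch' : ∀ i < b, ∀ u ∈ C (i+1), ∀ v ∈ C (i+1), u * v ∈ C (i+2) :=
        fun i hi u hu v hv => hschur (i+1) (by omega) u hu v hv
      have hcd : c 0 * d 0 ∈ C 1 := hschur 0 (by omega) _ (hc 0 (by omega)) _ (hd 0 (by omega))
      have hpsi : psi (c 0 * d 0) ∈ GammaCF b (fun i => C (i+1)) := psi_mem_gamma hcd
      have hsum := ih (fun i => C (i+1)) hsch' _ hpsi _ (ih (fun i => C (i+1)) hsch' _ hzx _ hzy)
      have key : (psi (c 0) + (2:ℤ) • ((∑ i ∈ Finset.range b, (2 ^ i : ℤ) • psi (c (i+1))) + (2 ^ b : ℤ) • l))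
          + (psi (d 0) + (2:ℤ) • ((∑ i ∈ Finset.range b, (2 ^ i : ℤ) • psi (d (i+1))) + (2 ^ b : ℤ) • m))
          = psi (c 0 + d 0) + (2:ℤ) • (psi (c 0 * d 0)
            + ((∑ i ∈ Finset.range b, (2 ^ i : ℤ) • psi (c (i+1))) + (2 ^ b : ℤ) • l
              + ((∑ i ∈ Finset.range b, (2 ^ i : ℤ) • psi (d (i+1))) + (2 ^ b : ℤ) • m))) := by
        have hpa : psi (c 0 + d 0) = psi (c 0) + psi (d 0) - (2:ℤ) • psi (c 0 * d 0) :=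
          eq_sub_iff_add_eq.mpr (psi_add (c 0) (d 0))
        rw [hpa]
        module
      rw [key]
      exact gamma_cons ((C 0).add_mem (hc 0 (by omega)) (hd 0 (by omega))) hsum

lemma gamma_nsmul {n : ℕ} {a : ℕ} {C : ℕ → Submodule (ZMod 2) (Fin n → ZMod 2)}
    (hschur : ∀ i < a, ∀ c ∈ C i, ∀ d ∈ C i, c * d ∈ C (i+1))
    {x : Fin n → ℤ} (hx : x ∈ GammaCF a C) : ∀ k : ℕ, k • x ∈ GammaCF a C := by
  intro k
  induction k with
  | zero => simpa using zero_mem_gamma a C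
  | succ j ih =>
      rw [succ_nsmul]
      exact gamma_add a C hschur _ ih _ hx

lemma gamma_neg {n : ℕ} {a : ℕ} {C : ℕ → Submodule (ZMod 2) (Fin n → ZMod 2)}
    (hschur : ∀ i < a, ∀ c ∈ C i, ∀ d ∈ C i, c * d ∈ C (i+1))
    {x : Fin n → ℤ} (hx : x ∈ GammaCF a C) : -x ∈ GammaCF a C := by
  have h1 : ((2^a - 1 : ℕ) • x : Fin n → ℤ) ∈ GammaCF a C := gamma_nsmul hschur hx _
  have h2 := absorb_gamma h1 (-x)
  have : ((2^a - 1 : ℕ) • x : Fin n → ℤ) + (2 ^ a : ℤ) • (-x) = -x := by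
    have hcast : ((2^a - 1 : ℕ) : ℤ) = 2^a - 1 := by
      have : (1:ℕ) ≤ 2^a := Nat.one_le_two_pow
      push_cast [this]; ring
    rw [← natCast_zsmul, hcast]
    module
  rwa [this] at h2

/-- If `C_i ⊆ C'_i` for all `i` and the primed chain is closed under
Schur product, then `Γ'_CF` is an additive subgroup of `ℤ^n` containing `Γ_CF`, and
hence `Λ_CF ⊆ Γ'_CF`. -/
theorem lambdaCF_subset_gammaCF' {n a : ℕ}
    (C C' : ℕ → Submodule (ZMod 2) (Fin n → ZMod 2))
    (hmono : ∀ i < a, C i ≤ C (i + 1)) (htop : C a = ⊤)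
    (hmono' : ∀ i < a, C' i ≤ C' (i + 1)) (htop' : C' a = ⊤)
    (hsub : ∀ i ≤ a, C i ≤ C' i)
    (hschur' : ∀ i < a, ∀ c ∈ C' i, ∀ d ∈ C' i, c * d ∈ C' (i + 1)) :
    (∃ G : AddSubgroup (Fin n → ℤ), (G : Set (Fin n → ℤ)) = GammaCF a C') ∧
    GammaCF a C ⊆ GammaCF a C' ∧
    (AddSubgroup.closure (GammaCF a C) : Set (Fin n → ℤ)) ⊆ GammaCF a C' := by
  have hsubset : GammaCF a C ⊆ GammaCF a C' := by
    rintro x ⟨c, l, hc, rfl⟩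
    exact ⟨c, l, fun i hi => hsub i (le_of_lt hi) (hc i hi), rfl⟩
  let G : AddSubgroup (Fin n → ℤ) :=
    { carrier := GammaCF a C'
      zero_mem' := zero_mem_gamma a C'
      add_mem' := fun hx hy => gamma_add a C' hschur' _ hx _ hy
      neg_mem' := fun hx => gamma_neg hschur' hx }
  refine ⟨⟨G, rfl⟩, hsubset, ?_⟩
  have hle : AddSubgroup.closure (GammaCF a C) ≤ G :=
    (AddSubgroup.closure_le G).mpr hsubset
  exact fun x hx => hle hx
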